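/- Let n ≥ 1 and let g : {0,1}^n → ℝ be the anti-dictator function g(x) = −x₁. Then 𝔈⁻(g) > 0 and ‖ℒ⁻g‖₂² = 𝔈⁻(g). (Together with the lower bound ‖ℒ⁻f‖₂² ≥ 𝔈⁻(f) for all f, this shows the dynamical spectral gap of the directed hypercube equals 1.) -/

import Mathlib

open Finset

/-- Flip the `i`-th bit of `x`. -/
def bflip {n : ℕ} (x : Fin n → Bool) (i : Fin n) : Fin n → Bool := Function.update x i (!x i)

/-- Set the `i`-th bit of `x` to `b`. -/
def bset {n : ℕ} (x : Fin n → Bool) (i : Fin n) (b : Bool) : Fin n → Bool := Function.update x i b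

/-- Density of `A` under the uniform measure on the hypercube. -/
noncomputable def mu {n : ℕ} (A : Finset (Fin n → Bool)) : ℝ := (A.card : ℝ) / 2 ^ n

/-- Expectation of `f` under the uniform measure on `A`. -/
noncomputable def expA {n : ℕ} (A : Finset (Fin n → Bool)) (f : (Fin n → Bool) → ℝ) : ℝ :=
  (∑ x ∈ A, f x) / (A.card : ℝ)

/-- Variance of `f` under the uniform measure on `A`. -/
noncomputable def varA {n : ℕ} (A : Finset (Fin n → Bool)) (f : (Fin n → Bool) → ℝ) : ℝ :=
  expA A (fun x => (f x - expA A f) ^ 2)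

/-- Covariance of `f` and `g` under the uniform measure on `A`. -/
noncomputable def covA {n : ℕ} (A : Finset (Fin n → Bool)) (f g : (Fin n → Bool) → ℝ) : ℝ :=
  expA A (fun x => (f x - expA A f) * (g x - expA A g))

/-- Dirichlet form of `f` on the subgraph of the hypercube induced by `A`. -/
noncomputable def dirA {n : ℕ} (A : Finset (Fin n → Bool)) (f : (Fin n → Bool) → ℝ) : ℝ :=
  (1 / 4) * expA A (fun x => ∑ i, (f x - f (bflip x i)) ^ 2 * (if bflip x i ∈ A then (1 : ℝ) else 0))

/-- Expectation of `f` under the uniform measure on the whole hypercube. -/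
noncomputable def expC {n : ℕ} (f : (Fin n → Bool) → ℝ) : ℝ := (∑ x, f x) / 2 ^ n

/-- The upward boundary (directed Dirichlet energy) `𝔈⁻(f)`. -/
noncomputable def energyMinus {n : ℕ} (f : (Fin n → Bool) → ℝ) : ℝ :=
  (1 / 4) * expC (fun x => ∑ i, (min 0 (f (bset x i true) - f (bset x i false))) ^ 2)

/-- The `L²`-distance of `f` to monotone functions on the hypercube. -/
noncomputable def dist2mono {n : ℕ} (f : (Fin n → Bool) → ℝ) : ℝ :=
  ⨅ g : {g : (Fin n → Bool) → ℝ // Monotone g}, Real.sqrt (expC fun x => (f x - g.1 x) ^ 2)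

/-- `f` is monotone increasing on the poset `A`. -/
def MonoIncrOn {n : ℕ} (A : Finset (Fin n → Bool)) (f : (Fin n → Bool) → ℝ) : Prop :=
  ∀ x ∈ A, ∀ y ∈ A, x ≤ y → f x ≤ f y

/-- `f` is non-constant on `A`. -/
def NonconstOn {n : ℕ} (A : Finset (Fin n → Bool)) (f : (Fin n → Bool) → ℝ) : Prop :=
  ∃ x ∈ A, ∃ y ∈ A, f x ≠ f y

/-- The approximate FKG ratio `δ(A)`. -/
noncomputable def fkgRatio {n : ℕ} (A : Finset (Fin n → Bool)) : ℝ :=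
  min 0 (sInf {r : ℝ | ∃ f g : (Fin n → Bool) → ℝ, MonoIncrOn A f ∧ MonoIncrOn A g ∧
    NonconstOn A f ∧ NonconstOn A g ∧ r = covA A f g / Real.sqrt (varA A f * varA A g)})

/-- The extension operator `T`. -/
noncomputable def extT {n : ℕ} (A : Finset (Fin n → Bool)) (hA : A.Nonempty)
    (f : (Fin n → Bool) → ℝ) : (Fin n → Bool) → ℝ :=
  fun x => if x ∈ A then f x else A.inf' hA f

/-- The coordinate component `ℒ^{(i)}` of the directed Laplacian. -/
noncomputable def lapI {n : ℕ} (f : (Fin n → Bool) → ℝ) (i : Fin n) (x : Fin n → Bool) : ℝ :=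
  (1 / 2) * (f (bflip x i) - f x) * (if f (bset x i true) < f (bset x i false) then (1 : ℝ) else 0)

/-- The directed Laplacian `ℒ⁻`. -/
noncomputable def lapMinus {n : ℕ} (f : (Fin n → Bool) → ℝ) (x : Fin n → Bool) : ℝ :=
  ∑ i, lapI f i x

lemma expC_const {n : ℕ} (c : ℝ) : expC (fun _ : Fin n → Bool => c) = c := by
  unfold expC
  rw [Finset.sum_const, Finset.card_univ]
  have h : Fintype.card (Fin n → Bool) = 2 ^ n := by simp
  rw [h]
  have : ((2:ℝ) ^ n) ≠ 0 := by positivity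
  field_simp
  simp [nsmul_eq_mul]

/-- tightness via the anti-dictator `g(x) = −x₁`:
`𝔈⁻(g) > 0` and `‖ℒ⁻g‖₂² = 𝔈⁻(g)`. -/
theorem stmt_16 (n : ℕ) (hn : 1 ≤ n) :
    0 < energyMinus (fun x : Fin n → Bool => -(if x ⟨0, hn⟩ then (1 : ℝ) else 0)) ∧
    expC (fun x => lapMinus (fun y : Fin n → Bool => -(if y ⟨0, hn⟩ then (1 : ℝ) else 0)) x ^ 2)
      = energyMinus (fun x : Fin n → Bool => -(if x ⟨0, hn⟩ then (1 : ℝ) else 0)) := by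
  set i0 : Fin n := ⟨0, hn⟩ with hi0
  set f : (Fin n → Bool) → ℝ := fun x => -(if x i0 then (1 : ℝ) else 0) with hf
  have hset0 : ∀ (x : Fin n → Bool) (b : Bool), f (bset x i0 b) = -(if b then (1:ℝ) else 0) := by
    intro x b; simp [hf, bset]
  have hother : ∀ (x : Fin n → Bool) (i : Fin n), i ≠ i0 → ∀ b, f (bset x i b) = f x := by
    intro x i hi b
    simp [hf, bset, Function.update_of_ne (Ne.symm hi)]
  have hflip : ∀ (x : Fin n → Bool) (i : Fin n), bflip x i = bset x i (!x i) := by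
    intro x i; rfl
  have henergy : energyMinus f = 1 / 4 := by
    unfold energyMinus
    have : (fun x : Fin n → Bool => ∑ i, (min 0 (f (bset x i true) - f (bset x i false))) ^ 2)
        = fun _ => (1 : ℝ) := by
      funext x
      rw [Finset.sum_eq_single_of_mem i0 (Finset.mem_univ _)]
      · rw [hset0, hset0]; norm_num
      · intro i _ hi
        rw [hother x i hi, hother x i hi]
        norm_num
    rw [this, expC_const]
    norm_num
  have hlap : ∀ x : Fin n → Bool, lapMinus f x ^ 2 = 1 / 4 := by
    intro x
    have : lapMinus f x = lapI f i0 x := by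
      unfold lapMinus
      rw [Finset.sum_eq_single_of_mem i0 (Finset.mem_univ _)]
      intro i _ hi
      unfold lapI
      rw [hother x i hi, hother x i hi]
      simp
    rw [this]
    unfold lapI
    rw [hflip, hset0, hset0, hset0]
    cases h : x i0 <;> simp [hf, h] <;> norm_num
  have h2 : expC (fun x => lapMinus f x ^ 2) = 1 / 4 := by
    have : (fun x => lapMinus f x ^ 2) = fun _ : Fin n → Bool => (1/4 : ℝ) := funext hlap
    rw [this, expC_const]
  constructor
  · rw [henergy]; norm_num
  · rw [h2, henergy]
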